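/- Let K be a field of characteristic zero with a derivation ∂ : K → K, let t ∈ K satisfy ∂t = 1, and let α ∈ K be a constant (∂α = 0). If z ∈ K is a solution of the second Painlevé equation P_II(α), i.e. ∂(∂z) = 2z³ + t·z + α, and if ∂z + z² + t/2 ≠ 0, then w = -z - (α + 1/2)/(∂z + z² + t/2) is a solution of P_II(α + 1), i.e. ∂(∂w) = 2w³ + t·w + (α + 1). -/

import Mathlib

/-- The Bäcklund transformation `T₊` sends solutions of `P_II(α)`
to solutions of `P_II(α + 1)`. -/
theorem PII_backlund_Tplus {K : Type*} [Field K] [CharZero K]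
    (D : Derivation ℚ K K) (t α z : K)
    (ht : D t = 1) (hα : D α = 0)
    (hz : D (D z) = 2 * z ^ 3 + t * z + α)
    (hden : D z + z ^ 2 + t / 2 ≠ 0) :
    D (D (-z - (α + 1 / 2) / (D z + z ^ 2 + t / 2))) =
      2 * (-z - (α + 1 / 2) / (D z + z ^ 2 + t / 2)) ^ 3 +
        t * (-z - (α + 1 / 2) / (D z + z ^ 2 + t / 2)) + (α + 1) := by
  have h2 : D (2:K) = 0 := by simpa using D.map_natCast 2
  have ha : D (α + 1/2) = 0 := by
    rw [map_add, hα, Derivation.leibniz_div_const _ _ _ h2, Derivation.map_one_eq_zero]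
    simp
  set u := D z + z ^ 2 + t / 2 with hu
  have hDu : D u = 2 * z * u + (α + 1/2) := by
    rw [hu, map_add, map_add, hz, D.leibniz_pow, Derivation.leibniz_div_const _ _ _ h2, ht]
    push_cast
    have : (2:K) ≠ 0 := two_ne_zero
    field_simp
    ring
  have hstep : D (-z - (α + 1 / 2) / u) =
      -D z + (α + 1/2) * (2 * z * u + (α+1/2)) / u ^ 2 := by
    rw [map_sub, map_neg, D.leibniz_div, ha, hDu]
    simp only [smul_eq_mul]
    field_simp
    ring
  have hDz : D z = u - z ^ 2 - t / 2 := by rw [hu]; ring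
  rw [hstep]
  simp only [map_add, map_neg, Derivation.leibniz_div, Derivation.leibniz,
    Derivation.leibniz_pow, ha, hDu, ht, h2, hz, smul_eq_mul, nsmul_eq_mul]
  rw [hDz]
  push_cast
  field_simp
  ring
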